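/- arXiv:1501.04394 — 5 statements merged into one kernel-verified Lean document; each statement's English description precedes it below -/
import Mathlib

section
/- If S is a set of column indices of B(l,r,L) such that all columns indexed by S are pairwise distinct (as vectors), then S is not a nonempty stopping set of B(l,r,L). -/
open Finset

/-- A set of column indices `S` is a stopping set of `H` if the submatrix of `H`
on the columns in `S` has no row of Hamming weight exactly one. -/
def isStoppingSet {m n : ℕ} (H : Matrix (Fin m) (Fin n) (ZMod 2)) (S : Finset (Fin n)) : Prop :=
  ∀ i : Fin m, (S.filter (fun j => H i j = 1)).card ≠ 1

/-- `len S = 1 + max_{a,b ∈ S} |a - b|` (for nonempty `S`; truncated subtraction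
over both orders realizes the absolute value). -/
def len {n : ℕ} (S : Finset (Fin n)) : ℕ :=
  1 + S.sup (fun a => S.sup (fun b => (a : ℕ) - (b : ℕ)))

/-- `spanM H` is the minimum of `len S` over nonempty stopping sets `S` of `H`. -/
noncomputable def spanM {m n : ℕ} (H : Matrix (Fin m) (Fin n) (ZMod 2)) : ℕ :=
  sInf {w | ∃ S : Finset (Fin n), S.Nonempty ∧ isStoppingSet H S ∧ len S = w}

/-- A nonempty stopping set is irreducible (minimal) if no proper nonempty subset
is a stopping set. -/
def isIrreducible {m n : ℕ} (H : Matrix (Fin m) (Fin n) (ZMod 2)) (S : Finset (Fin n)) : Prop :=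
  S.Nonempty ∧ isStoppingSet H S ∧ ∀ S' : Finset (Fin n), S' ⊂ S → S'.Nonempty → ¬ isStoppingSet H S'

/-- The base matrix `B(l,r,L)` with `k = r/l` (0-indexed): column `q` belongs to
block `q / k` and has ones exactly in rows `q/k, …, q/k + (l-1)`. -/
def B (l k L : ℕ) : Matrix (Fin (L + l - 1)) (Fin (k * L)) (ZMod 2) :=
  fun p q => if (q : ℕ) / k ≤ (p : ℕ) ∧ (p : ℕ) ≤ (q : ℕ) / k + (l - 1) then 1 else 0

/-- If all columns of `B(l,r,L)` indexed by `S` are pairwise distinct as vectors,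
then `S` is not a nonempty stopping set. -/
theorem not_stopping_of_distinct_columns (l k L : ℕ) (hl : 0 < l) (hk : 0 < k) (hL : 0 < L)
    (S : Finset (Fin (k * L)))
    (hdist : ∀ α ∈ S, ∀ β ∈ S, α ≠ β → ∃ p : Fin (L + l - 1), B l k L p α ≠ B l k L p β)
    (hne : S.Nonempty) :
    ¬ isStoppingSet (B l k L) S := by
  intro hstop
  -- columns with the same block are equal, so blocks are distinct on S
  have hblock : ∀ α ∈ S, ∀ β ∈ S, (α : ℕ) / k = (β : ℕ) / k → α = β := by
    intro α hα β hβ hqb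
    by_contra hne'
    obtain ⟨p, hp⟩ := hdist α hα β hβ hne'
    apply hp
    simp [B, hqb]
  obtain ⟨q₀, hq₀, hb⟩ := Finset.exists_mem_eq_inf' hne (fun q => (q : ℕ) / k)
  set b := S.inf' hne (fun q => (q : ℕ) / k) with hbdef
  have hbmin : ∀ q ∈ S, b ≤ (q : ℕ) / k := fun q hq => Finset.inf'_le _ hq
  have hblt : b < L + l - 1 := by
    have : (q₀ : ℕ) < k * L := q₀.isLt
    have h1 : (q₀ : ℕ) / k < L := Nat.div_lt_of_lt_mul (by omega)
    omega
  apply hstop ⟨b, hblt⟩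
  have : S.filter (fun j => B l k L ⟨b, hblt⟩ j = 1) = {q₀} := by
    ext q
    rw [Finset.mem_filter, Finset.mem_singleton]
    simp only [B]
    constructor
    · rintro ⟨hq, hone⟩
      by_cases hc : (q : ℕ) / k ≤ b ∧ b ≤ (q : ℕ) / k + (l - 1)
      · exact hblock q hq q₀ hq₀ (by have := hbmin q hq; omega)
      · simp [hc] at hone
    · rintro rfl
      refine ⟨hq₀, ?_⟩
      rw [if_pos ⟨by omega, by omega⟩]
  rw [this]
  simp
end

section
/- Every nonempty stopping set of B(l,r,L) contains two distinct indices α, β belonging to the same block T_i (equivalently, with equal columns b_α = b_β). -/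
open Finset

/-- Every nonempty stopping set of `B(l,r,L)` contains two distinct indices in the
same block (equivalently, with equal columns). -/
theorem stopping_contains_same_block_pair (l k L : ℕ) (hl : 0 < l) (hk : 0 < k) (hL : 0 < L)
    (S : Finset (Fin (k * L))) (hne : S.Nonempty) (hS : isStoppingSet (B l k L) S) :
    ∃ α ∈ S, ∃ β ∈ S, α ≠ β ∧ (α : ℕ) / k = (β : ℕ) / k := by
  classical
  obtain ⟨α, hαS, hαmin⟩ := S.exists_min_image (fun q => (q : ℕ)) hne
  have hαL : (α : ℕ) / k < L + l - 1 := by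
    have h1 : (α : ℕ) < k * L := α.isLt
    have h2 : (α : ℕ) / k < L := Nat.div_lt_of_lt_mul (by omega)
    omega
  set p : Fin (L + l - 1) := ⟨(α : ℕ) / k, hαL⟩
  have hαT : α ∈ S.filter (fun j => B l k L p j = 1) := by
    simp only [Finset.mem_filter]
    refine ⟨hαS, ?_⟩
    simp [B, p]
  have hcard := hS p
  have h2 : 2 ≤ (S.filter (fun j => B l k L p j = 1)).card := by
    have := Finset.card_pos.mpr ⟨α, hαT⟩
    omega
  obtain ⟨β, hβT, hβα⟩ := Finset.exists_mem_ne h2 α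
  have hβS := (Finset.mem_filter.mp hβT).1
  have hβ1 := (Finset.mem_filter.mp hβT).2
  refine ⟨α, hαS, β, hβS, hβα.symm, ?_⟩
  have hle : (β : ℕ) / k ≤ (α : ℕ) / k := by
    by_contra h
    simp only [B, p] at hβ1
    split_ifs at hβ1 with hc
    · omega
    · exact absurd hβ1 (by decide)
  have hge : (α : ℕ) / k ≤ (β : ℕ) / k := Nat.div_le_div_right (hαmin β hβS)
  omega
end

section
/- The set of irreducible (minimal nonempty) stopping sets of the base matrix B(l,r,L) is exactly the set of two-element subsets {α, β} with α, β in a common block T_i. -/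
open Finset

lemma row_lt (l k L : ℕ) (hl : 0 < l) (hk : 2 ≤ k) (q : Fin (k * L)) :
    (q : ℕ) / k < L + l - 1 := by
  have h1 : (q : ℕ) / k < L := by
    rw [Nat.div_lt_iff_lt_mul (by omega)]
    calc (q:ℕ) < k * L := q.isLt
    _ = L * k := mul_comm _ _
  omega

lemma single_not_stopping (l k L : ℕ) (hl : 0 < l) (hk : 2 ≤ k) (q : Fin (k * L)) :
    ¬ isStoppingSet (B l k L) {q} := by
  intro h
  apply h ⟨(q : ℕ) / k, row_lt l k L hl hk q⟩
  rw [Finset.filter_singleton, if_pos]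
  · simp
  · show B l k L _ q = 1
    unfold B
    rw [if_pos]
    simp

lemma col_eq (l k L : ℕ) {α β : Fin (k * L)} (h : (α : ℕ) / k = (β : ℕ) / k)
    (p : Fin (L + l - 1)) : B l k L p α = B l k L p β := by
  unfold B; rw [h]

lemma pair_stopping (l k L : ℕ) {α β : Fin (k * L)} (hab : α ≠ β)
    (h : (α : ℕ) / k = (β : ℕ) / k) : isStoppingSet (B l k L) {α, β} := by
  intro p
  by_cases h1 : B l k L p α = 1
  · have h2 : B l k L p β = 1 := (col_eq l k L h p) ▸ h1
    rw [Finset.filter_insert, if_pos h1, Finset.filter_singleton, if_pos h2]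
    rw [Finset.card_insert_of_notMem (by simp [hab])]
    simp
  · have h2 : ¬ B l k L p β = 1 := fun hh => h1 ((col_eq l k L h p) ▸ hh)
    rw [Finset.filter_insert, if_neg h1, Finset.filter_singleton, if_neg h2]
    simp

/-- The irreducible stopping sets of `B(l,r,L)` are exactly the two-element subsets
`{α, β}` with `α ≠ β` in a common block. -/
theorem irreducible_iff_same_block_pair (l k L : ℕ) (hl : 0 < l) (hk : 2 ≤ k) (hL : 0 < L)
    (S : Finset (Fin (k * L))) :
    isIrreducible (B l k L) S ↔
      ∃ α β : Fin (k * L), α ≠ β ∧ (α : ℕ) / k = (β : ℕ) / k ∧ S = {α, β} := by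
  constructor
  · rintro ⟨hne, hstop, hmin⟩
    set α := S.min' hne with hα
    have hαmem : α ∈ S := S.min'_mem hne
    have hp : (α : ℕ) / k < L + l - 1 := row_lt l k L hl hk α
    set p : Fin (L + l - 1) := ⟨(α : ℕ) / k, hp⟩ with hpdef
    have hfil : S.filter (fun j => B l k L p j = 1)
        = S.filter (fun j : Fin (k * L) => (j : ℕ) / k = (α : ℕ) / k) := by
      apply Finset.filter_congr
      intro j hj
      have hle : (α : ℕ) / k ≤ (j : ℕ) / k :=
        Nat.div_le_div_right (S.min'_le j hj)
      show (B l k L p j = 1) ↔ _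
      unfold B
      split
      · rename_i hcond
        have hp1 : (p : ℕ) = (α : ℕ) / k := rfl
        rw [hp1] at hcond
        exact iff_of_true rfl (by omega)
      · rename_i hcond
        have hp1 : (p : ℕ) = (α : ℕ) / k := rfl
        rw [hp1] at hcond
        exact iff_of_false (by decide) (fun heq => hcond ⟨le_of_eq heq, by omega⟩)
    have hαfil : α ∈ S.filter (fun j => B l k L p j = 1) := by
      rw [hfil]; exact Finset.mem_filter.mpr ⟨hαmem, rfl⟩
    have hcard1 : 1 ≤ (S.filter (fun j => B l k L p j = 1)).card :=
      Finset.card_pos.mpr ⟨α, hαfil⟩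
    have hlt : 1 < (S.filter (fun j => B l k L p j = 1)).card := by
      have := hstop p; omega
    obtain ⟨β, hβfil, hβne⟩ := Finset.exists_mem_ne hlt α
    rw [hfil] at hβfil
    obtain ⟨hβmem, hβblk⟩ := Finset.mem_filter.mp hβfil
    have hblk : (α : ℕ) / k = (β : ℕ) / k := hβblk.symm
    refine ⟨α, β, hβne.symm, hblk, ?_⟩
    have hsub : ({α, β} : Finset (Fin (k * L))) ⊆ S := by
      intro x hx
      rcases Finset.mem_insert.mp hx with rfl | hx
      · exact hαmem
      · rw [Finset.mem_singleton.mp hx]; exact hβmem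
    by_contra hneq
    exact hmin {α, β} (Finset.ssubset_iff_subset_ne.mpr ⟨hsub, Ne.symm hneq⟩)
      ⟨α, by simp⟩ (pair_stopping l k L hβne.symm hblk)
  · rintro ⟨α, β, hab, hblk, rfl⟩
    refine ⟨⟨α, by simp⟩, pair_stopping l k L hab hblk, ?_⟩
    intro S' hss hne' hstop'
    have hlt : S'.card < 2 := by
      have := Finset.card_lt_card hss
      rwa [Finset.card_pair hab] at this
    have h1 : 1 ≤ S'.card := Finset.card_pos.mpr hne'
    have hc1 : S'.card = 1 := by omega
    obtain ⟨γ, rfl⟩ := Finset.card_eq_one.mp hc1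
    exact single_not_stopping l k L hl hk γ hstop'
end

section
/- For the band splitting permutation f, there exist distinct indices α, β in the same block with |f^{-1}(α) - f^{-1}(β)| = L; hence the minimum of |f^{-1}(α) - f^{-1}(β)| over same-block pairs is exactly L. -/
/-- There exist distinct same-block indices with `|f⁻¹(α) - f⁻¹(β)| = L`; hence the
minimum of `|f⁻¹(α) - f⁻¹(β)|` over same-block pairs is exactly `L`. -/
theorem band_splitting_inv_gap_tight (k L : ℕ) (hk : 2 ≤ k) (hL : 0 < L) (finv : ℕ → ℕ)
    (hfinv : ∀ s ∈ Set.Icc 1 k, ∀ t ∈ Set.Icc 1 L, finv (s + (t - 1) * k) = (s - 1) * L + t) :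
    IsLeast {d : ℤ | ∃ α ∈ Set.Icc 1 (k * L), ∃ β ∈ Set.Icc 1 (k * L),
      α ≠ β ∧ (α - 1) / k = (β - 1) / k ∧ d = |(finv α : ℤ) - (finv β : ℤ)|} (L : ℤ) := by
  have hk0 : 0 < k := by omega
  -- general formula for finv on [1, k*L]
  have key : ∀ γ ∈ Set.Icc 1 (k * L),
      finv γ = ((γ - 1) % k) * L + (γ - 1) / k + 1 := by
    intro γ hγ
    obtain ⟨hγ1, hγ2⟩ := hγ
    have hmod := Nat.mod_lt (γ - 1) hk0
    have hs : (γ - 1) % k + 1 ∈ Set.Icc 1 k := ⟨Nat.le_add_left 1 _, hmod⟩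
    have hdiv : (γ - 1) / k < L :=
      Nat.div_lt_of_lt_mul (by have := Nat.mul_comm L k; omega)
    have ht : (γ - 1) / k + 1 ∈ Set.Icc 1 L := ⟨Nat.le_add_left 1 _, hdiv⟩
    have h := hfinv _ hs _ ht
    simp only [Nat.add_sub_cancel] at h
    have hγeq : (γ - 1) % k + 1 + (γ - 1) / k * k = γ := by
      have := Nat.mod_add_div' (γ - 1) k
      omega
    rw [hγeq] at h
    omega
  constructor
  · refine ⟨1, ⟨le_refl 1, by nlinarith⟩, 2, ⟨by omega, by nlinarith⟩, by omega, ?_, ?_⟩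
    · simp [Nat.div_eq_of_lt (by omega : 1 < k)]
    · have h1 : finv 1 = 1 := by
        have := hfinv 1 ⟨le_refl 1, by omega⟩ 1 ⟨le_refl 1, hL⟩
        simpa using this
      have h2 : finv 2 = L + 1 := by
        have := hfinv 2 ⟨by omega, hk⟩ 1 ⟨le_refl 1, hL⟩
        simpa using this
      rw [h1, h2, abs_sub_comm]
      push_cast
      rw [show (L : ℤ) + 1 - 1 = L by ring, abs_of_nonneg (by positivity)]
  · rintro d ⟨α, hα, β, hβ, hne, hblk, rfl⟩
    obtain ⟨hα1, hα2⟩ := hα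
    obtain ⟨hβ1, hβ2⟩ := hβ
    have hrne : (α - 1) % k ≠ (β - 1) % k := by
      intro h
      have h1 := Nat.mod_add_div' (α - 1) k
      have h2 := Nat.mod_add_div' (β - 1) k
      rw [hblk] at h1
      exact hne (by omega)
    rw [key α ⟨hα1, hα2⟩, key β ⟨hβ1, hβ2⟩, hblk]
    have hcast : (((α - 1) % k * L + (β - 1) / k + 1 : ℕ) : ℤ)
        - (((β - 1) % k * L + (β - 1) / k + 1 : ℕ) : ℤ)
        = ((((α - 1) % k : ℕ) : ℤ) - (((β - 1) % k : ℕ) : ℤ)) * L := by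
      push_cast; ring
    rw [hcast, abs_mul, abs_of_nonneg (by positivity : (0:ℤ) ≤ (L:ℤ))]
    have hne' : ((((α - 1) % k : ℕ) : ℤ) - (((β - 1) % k : ℕ) : ℤ)) ≠ 0 :=
      sub_ne_zero.mpr (by exact_mod_cast hrne)
    have h1 : (1 : ℤ) ≤ |(((α - 1) % k : ℕ) : ℤ) - (((β - 1) % k : ℕ) : ℤ)| := by
      have := abs_pos.mpr hne'
      omega
    nlinarith [abs_nonneg ((((α - 1) % k : ℕ) : ℤ) - (((β - 1) % k : ℕ) : ℤ)),
      (by exact_mod_cast hL : (0:ℤ) < L)]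
end

section
/- The span of the permuted base matrix B*(l,r,L) (obtained by applying the band splitting permutation to the columns of B(l,r,L)) equals L+1, and thus W_max(B*(l,r,L)) = L. -/
open Finset

/-- The band splitting permutation, 0-indexed: position `j = s·L + t`
(`s ∈ [0,k)`, `t ∈ [0,L)`) is sent to column `s + t·k` of the base matrix. -/
def fnat (k L j : ℕ) : ℕ := j / L + (j % L) * k

/-- The permuted base matrix `B*(l,r,L)`: its `j`-th column is column `fnat k L j`
of `B(l,r,L)`. -/
def Bstar (l k L : ℕ) : Matrix (Fin (L + l - 1)) (Fin (k * L)) (ZMod 2) :=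
  fun p j => if (fnat k L (j : ℕ)) / k ≤ (p : ℕ) ∧
      (p : ℕ) ≤ (fnat k L (j : ℕ)) / k + (l - 1) then 1 else 0

lemma col_block {k L : ℕ} (hk : 0 < k) (hL : 0 < L) {j : ℕ} (hj : j < k * L) :
    fnat k L j / k = j % L := by
  have h1 : j / L < k := (Nat.div_lt_iff_lt_mul hL).2 hj
  rw [fnat, Nat.add_mul_div_right _ _ hk, Nat.div_eq_of_lt h1, Nat.zero_add]

lemma Bstar_one_iff {l k L : ℕ} (hk : 0 < k) (hL : 0 < L)
    (p : Fin (L + l - 1)) (j : Fin (k * L)) :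
    Bstar l k L p j = 1 ↔ ((j : ℕ) % L ≤ (p : ℕ) ∧ (p : ℕ) ≤ (j : ℕ) % L + (l - 1)) := by
  rw [Bstar, col_block hk hL j.isLt]
  split_ifs with h
  · simpa using h
  · exact iff_of_false (by decide) h

/-- The span of the permuted base matrix `B*(l,r,L)` equals `L + 1`, and thus
`W_max(B*) = Span - 1 = L`. -/
theorem span_Bstar (l k L : ℕ) (hl : 0 < l) (hk : 2 ≤ k) (hL : 0 < L) :
    spanM (Bstar l k L) = L + 1 ∧ spanM (Bstar l k L) - 1 = L := by
  have hk0 : 0 < k := by omega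
  have hLkL : L < k * L := by nlinarith
  have h0kL : 0 < k * L := by omega
  have hne : (⟨0, h0kL⟩ : Fin (k * L)) ≠ ⟨L, hLkL⟩ := by
    intro h
    have := congrArg Fin.val h
    simp at this
    omega
  have hmem : (L + 1) ∈ {w | ∃ S : Finset (Fin (k * L)), S.Nonempty ∧
      isStoppingSet (Bstar l k L) S ∧ len S = w} := by
    refine ⟨{⟨0, h0kL⟩, ⟨L, hLkL⟩}, ⟨⟨0, h0kL⟩, by simp⟩, ?_, ?_⟩
    · intro p
      have hiff : (Bstar l k L p ⟨0, h0kL⟩ = 1) ↔ (Bstar l k L p ⟨L, hLkL⟩ = 1) := by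
        rw [Bstar_one_iff hk0 hL, Bstar_one_iff hk0 hL]
        simp [Nat.mod_self]
      by_cases hc : Bstar l k L p ⟨0, h0kL⟩ = 1
      · have hc' := hiff.1 hc
        rw [Finset.filter_insert, if_pos hc, Finset.filter_singleton, if_pos hc']
        rw [Finset.card_insert_of_notMem (by simp [hne])]
        simp
      · have hc' := fun h => hc (hiff.2 h)
        rw [Finset.filter_insert, if_neg hc, Finset.filter_singleton, if_neg hc']
        simp
    · rw [len]
      simp only [Finset.sup_insert, Finset.sup_singleton, Fin.val_mk]
      omega
  refine have hspan : spanM (Bstar l k L) = L + 1 := ?_; ⟨hspan, by omega⟩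
  refine le_antisymm (Nat.sInf_le hmem) (le_csInf ⟨L + 1, hmem⟩ ?_)
  rintro w ⟨S, hSne, hSstop, hlen⟩
  by_contra hlt
  push_neg at hlt
  have hdist : ∀ a ∈ S, ∀ b ∈ S, (a : ℕ) - (b : ℕ) < L := by
    intro a ha b hb
    have h1 : (a : ℕ) - (b : ℕ) ≤ S.sup (fun b => (a : ℕ) - (b : ℕ)) :=
      Finset.le_sup (f := fun b : Fin (k * L) => (a : ℕ) - (b : ℕ)) hb
    have h2 : S.sup (fun b' => (a : ℕ) - (b' : ℕ)) ≤
        S.sup (fun a => S.sup (fun b => (a : ℕ) - (b : ℕ))) :=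
      Finset.le_sup (f := fun a : Fin (k * L) =>
        S.sup (fun b => (a : ℕ) - (b : ℕ))) ha
    rw [len] at hlen
    omega
  have hinj : ∀ a ∈ S, ∀ b ∈ S, (a : ℕ) % L = (b : ℕ) % L → a = b := by
    intro a ha b hb hmod
    rcases le_total (a : ℕ) (b : ℕ) with h | h
    · have hdvd : L ∣ (b : ℕ) - (a : ℕ) := (Nat.modEq_iff_dvd' h).1 hmod
      have hd := hdist b hb a ha
      have : (b : ℕ) - (a : ℕ) = 0 := by
        by_contra h0
        exact absurd (Nat.le_of_dvd (Nat.pos_of_ne_zero h0) hdvd) (by omega)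
      exact Fin.ext (by omega)
    · have hdvd : L ∣ (a : ℕ) - (b : ℕ) := (Nat.modEq_iff_dvd' h).1 hmod.symm
      have hd := hdist a ha b hb
      have : (a : ℕ) - (b : ℕ) = 0 := by
        by_contra h0
        exact absurd (Nat.le_of_dvd (Nat.pos_of_ne_zero h0) hdvd) (by omega)
      exact Fin.ext (by omega)
  have himg : (S.image (fun j : Fin (k * L) => (j : ℕ) % L)).Nonempty :=
    hSne.image _
  obtain ⟨j0, hj0S, hj0⟩ := Finset.mem_image.1 (Finset.min'_mem _ himg)
  have ht0min : ∀ j ∈ S, (j0 : ℕ) % L ≤ (j : ℕ) % L := by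
    intro j hj
    rw [hj0]
    exact Finset.min'_le _ _ (Finset.mem_image_of_mem _ hj)
  have ht0L : (j0 : ℕ) % L < L := Nat.mod_lt _ hL
  have hrow : (j0 : ℕ) % L < L + l - 1 := by omega
  have hfilter : S.filter (fun j => Bstar l k L ⟨(j0 : ℕ) % L, hrow⟩ j = 1) = {j0} := by
    ext j
    simp only [Finset.mem_filter, Finset.mem_singleton, Bstar_one_iff hk0 hL]
    constructor
    · rintro ⟨hjS, h1, h2⟩
      exact hinj j hjS j0 hj0S (le_antisymm h1 (ht0min j hjS))
    · rintro rfl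
      exact ⟨hj0S, le_refl _, Nat.le_add_right _ _⟩
  have := hSstop ⟨(j0 : ℕ) % L, hrow⟩
  rw [hfilter] at this
  simp at this
end
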